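/- Let K be a field with char K ≠ 2 and algebraic closure K̄, let f be a monic irreducible quadratic polynomial over K with discriminant Δ(f), and let b ∈ K with b ≠ 0. Then: (i) for every root α ∈ K̄ of f, the minimal polynomial over K of f(α − b) equals (x − b²)² − b²Δ(f); that is, f ▷ f_b⁺ = (x − b²)² − b²Δ(f), a monic irreducible quadratic; and (ii) the discriminant of f ▷ f_b⁺ equals (2b)²Δ(f). -/

import Mathlib

open Polynomial

/-- The discriminant of a monic quadratic `x² + Bx + C`, namely `B² - 4C`. -/
def disc {K : Type*} [Field K] (f : K[X]) : K :=
  f.coeff 1 ^ 2 - 4 * f.coeff 0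

/-- Lemma 4.2 (i) and (ii): for a monic irreducible quadratic `f` over a field of
characteristic `≠ 2` and `b ≠ 0`, one has `f ▷ f_b⁺ = (x - b²)² - b²·Δ(f)`, a monic
irreducible quadratic, and `Δ(f ▷ f_b⁺) = (2b)²·Δ(f)`. -/
theorem quadratic_selfWedge (K : Type*) [Field K] (hchar : ringChar K ≠ 2)
    (f : K[X]) (hf_monic : f.Monic) (hf_irr : Irreducible f) (hf_deg : f.natDegree = 2)
    (b : K) (hb : b ≠ 0) :
    (∀ α : AlgebraicClosure K, Polynomial.aeval α f = 0 →
      minpoly K (Polynomial.aeval (α - algebraMap K (AlgebraicClosure K) b) f)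
        = (X - C (b ^ 2)) ^ 2 - C (b ^ 2 * disc f)) ∧
    ((X - C (b ^ 2)) ^ 2 - C (b ^ 2 * disc f) : K[X]).Monic ∧
    Irreducible ((X - C (b ^ 2)) ^ 2 - C (b ^ 2 * disc f) : K[X]) ∧
    ((X - C (b ^ 2)) ^ 2 - C (b ^ 2 * disc f) : K[X]).natDegree = 2 ∧
    disc ((X - C (b ^ 2)) ^ 2 - C (b ^ 2 * disc f) : K[X]) = (2 * b) ^ 2 * disc f := by
  have two_ne : (2 : K) ≠ 0 := Ring.two_ne_zero hchar
  obtain ⟨B, hB⟩ : ∃ B : K, f.coeff 1 = B := ⟨_, rfl⟩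
  obtain ⟨C0, hC0⟩ : ∃ C0 : K, f.coeff 0 = C0 := ⟨_, rfl⟩
  set g : K[X] := (X - C (b ^ 2)) ^ 2 - C (b ^ 2 * disc f) with hgdef
  have hdisc : disc f = B ^ 2 - 4 * C0 := by rw [disc, hB, hC0]
  -- explicit form of f
  have hf2 : f.coeff 2 = 1 := by
    have := hf_monic.coeff_natDegree
    rwa [hf_deg] at this
  have hf_eq : f = X ^ 2 + C B * X + C C0 := by
    apply Polynomial.ext
    intro n
    match n with
    | 0 => simp only [coeff_add, coeff_C_mul, coeff_X_pow, coeff_C, coeff_X]; simp [hC0]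
    | 1 => simp only [coeff_add, coeff_C_mul, coeff_X_pow, coeff_C, coeff_X]; simp [hB]
    | 2 => simp only [coeff_add, coeff_C_mul, coeff_X_pow, coeff_C, coeff_X]; simp [hf2]
    | (n + 3) =>
      rw [coeff_eq_zero_of_natDegree_lt (by omega)]
      simp only [coeff_add, coeff_C_mul, coeff_X_pow, coeff_C, coeff_X]
      rw [if_neg (by omega)]
      norm_num
  -- explicit form of g
  have hg_eq : g = X ^ 2 + C (-(2 * b ^ 2)) * X + C (b ^ 2 * b ^ 2 - b ^ 2 * disc f) := by
    rw [hgdef]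
    simp only [C_neg, C_mul, C_sub, C_pow, map_ofNat]
    ring
  have hg1 : g.coeff 1 = -(2 * b ^ 2) := by
    rw [hg_eq]
    simp only [coeff_add, coeff_C_mul, coeff_X_pow, coeff_C, coeff_X]
    norm_num
  have hg0 : g.coeff 0 = b ^ 2 * b ^ 2 - b ^ 2 * disc f := by
    rw [hg_eq]
    simp only [coeff_add, coeff_C_mul, coeff_X_pow, coeff_C, coeff_X]
    norm_num
  have hg_monic : g.Monic := by
    rw [hg_eq]; monicity!
  have hg_deg : g.natDegree = 2 := by
    rw [hg_eq]; compute_degree!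
  -- disc f is not a square
  have hΔ : ∀ s : K, s ^ 2 ≠ disc f := by
    intro s hs
    rw [hdisc] at hs
    have hroot : f.IsRoot ((s - B) / 2) := by
      rw [hf_eq]
      simp only [IsRoot, eval_add, eval_mul, eval_pow, eval_X, eval_C]
      field_simp
      linear_combination hs
    have h0 : f.roots = 0 :=
      (irreducible_iff_roots_eq_zero_of_degree_le_three (by omega) (by omega)).mp hf_irr
    have hmem : (s - B) / 2 ∈ f.roots := (mem_roots hf_monic.ne_zero).mpr hroot
    rw [h0] at hmem
    exact Multiset.notMem_zero _ hmem
  -- g is irreducible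
  have hg_irr : Irreducible g := by
    rw [irreducible_iff_roots_eq_zero_of_degree_le_three (by omega) (by omega)]
    rw [Multiset.eq_zero_iff_forall_notMem]
    intro r hr
    have hr0 : g.IsRoot r := (mem_roots hg_monic.ne_zero).mp hr
    have hr' : (r - b ^ 2) ^ 2 - b ^ 2 * disc f = 0 := by
      rw [hgdef] at hr0
      simpa [IsRoot] using hr0
    apply hΔ ((r - b ^ 2) / b)
    field_simp
    linear_combination hr'
  refine ⟨?_, hg_monic, hg_irr, hg_deg, ?_⟩
  · intro α hα
    have hα' : algebraMap K (AlgebraicClosure K) C0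
        + algebraMap K (AlgebraicClosure K) B * α + α ^ 2 = 0 := by
      rw [hf_eq] at hα
      simp only [map_add, map_mul, map_pow, aeval_X, aeval_C] at hα
      linear_combination hα
    have hγ : Polynomial.aeval (α - algebraMap K (AlgebraicClosure K) b) f
        = algebraMap K (AlgebraicClosure K) C0
          + algebraMap K (AlgebraicClosure K) B * (α - algebraMap K (AlgebraicClosure K) b)
          + (α - algebraMap K (AlgebraicClosure K) b) ^ 2 := by
      rw [hf_eq]
      simp only [map_add, map_mul, map_pow, aeval_X, aeval_C]
      ring
    have key : Polynomial.aeval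
        (Polynomial.aeval (α - algebraMap K (AlgebraicClosure K) b) f) g = 0 := by
      rw [hg_eq, hγ, hdisc]
      simp only [map_add, map_sub, map_mul, map_pow, map_neg, map_ofNat, aeval_X, aeval_C]
      linear_combination ((algebraMap K (AlgebraicClosure K) C0
          + algebraMap K (AlgebraicClosure K) B * α + α ^ 2)
        - 2 * algebraMap K (AlgebraicClosure K) b * (algebraMap K (AlgebraicClosure K) B + 2 * α)
        + 4 * (algebraMap K (AlgebraicClosure K) b) ^ 2) * hα'
    exact (minpoly.eq_of_irreducible_of_monic hg_irr key hg_monic).symm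
  · rw [disc, hg1, hg0, hdisc]
    ring
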